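/- Let N ≥ 1, S ≥ 1, and fix a lag ℓ with 0 ≤ ℓ < S. Let μ be a probability distribution on assignment matrices W : Fin N × Fin S → {0,1}. For each unit n and timestep s with s ≥ ℓ+1 (in 1-based indexing, i.e., s ∈ {ℓ+1,…,S}) let Y n s : ({0,1}-valued N×S matrices) → ℝ satisfy: for all W, W', if W n t = W' n t for every t ∈ {s−ℓ,…,s}, then Y n s W = Y n s W' (the outcome of pair (n,s) depends only on unit n's assignments in the window of length ℓ+1 ending at s; this encodes SUTVA, non-anticipation, and ℓ-bounded carryover). Assume that for every such (n,s) the probabilities π₁(n,s) := μ{W : W n t = 1 for all t ∈ {s−ℓ,…,s}} and π₀(n,s) := μ{W : W n t = 0 for all t ∈ {s−ℓ,…,s}} are both strictly positive. Define the lag-ℓ Horvitz–Thompson estimator τ̂_ℓ(W) = (1/(N·(S−ℓ))) · Σ_{n} Σ_{s=ℓ+1}^{S} Y n s W · [ 1{W n t = 1 ∀ t ∈ {s−ℓ,…,s}} / π₁(n,s) − 1{W n t = 0 ∀ t ∈ {s−ℓ,…,s}} / π₀(n,s) ] and the lag-ℓ average treatment effect τ_ℓ = (1/(N·(S−ℓ)))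 · Σ_{n} Σ_{s=ℓ+1}^{S} [ Y n s (all-ones matrix) − Y n s (all-zeros matrix) ]. Then the expectation of τ̂_ℓ under μ equals τ_ℓ. -/
import Mathlib


/-- **Unbiasedness of the lag-ℓ Horvitz–Thompson estimator under SUTVA,
non-anticipation and ℓ-bounded carryover effects.**  Assignment matrices are
`W : Fin N × Fin S → Bool` (0-based time indexing: the timesteps
`s` with `ℓ ≤ s.val` correspond to the 1-based timesteps `ℓ+1,…,S`).
Each potential outcome `Y n s` (for `ℓ ≤ s.val`) depends only on unit `n`'s
assignments in the window `{s-ℓ,…,s}`, and the window exposure probabilities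
`π₁ n s`, `π₀ n s` are strictly positive.  Then the expectation of the lag-ℓ
Horvitz–Thompson estimator equals the lag-ℓ average treatment effect. -/
theorem lagged_horvitz_thompson_unbiased
    (N S ℓ : ℕ) (hN : 1 ≤ N) (hS : 1 ≤ S) (hℓ : ℓ < S)
    (μ : (Fin N × Fin S → Bool) → ℝ)
    (hμ_nonneg : ∀ W, 0 ≤ μ W)
    (hμ_sum : ∑ W : Fin N × Fin S → Bool, μ W = 1)
    (Y : Fin N → Fin S → (Fin N × Fin S → Bool) → ℝ)
    (hY : ∀ (n : Fin N) (s : Fin S), ℓ ≤ s.val →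
      ∀ (W W' : Fin N × Fin S → Bool),
        (∀ t : Fin S, s.val - ℓ ≤ t.val → t.val ≤ s.val → W (n, t) = W' (n, t)) →
        Y n s W = Y n s W')
    (π₁ π₀ : Fin N → Fin S → ℝ)
    (hπ₁ : ∀ n s, π₁ n s = ∑ W ∈ Finset.univ.filter
      (fun W : Fin N × Fin S → Bool =>
        ∀ t : Fin S, s.val - ℓ ≤ t.val → t.val ≤ s.val → W (n, t) = true), μ W)
    (hπ₀ : ∀ n s, π₀ n s = ∑ W ∈ Finset.univ.filter
      (fun W : Fin N × Fin S → Bool =>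
        ∀ t : Fin S, s.val - ℓ ≤ t.val → t.val ≤ s.val → W (n, t) = false), μ W)
    (hπ₁_pos : ∀ (n : Fin N) (s : Fin S), ℓ ≤ s.val → 0 < π₁ n s)
    (hπ₀_pos : ∀ (n : Fin N) (s : Fin S), ℓ ≤ s.val → 0 < π₀ n s) :
    ∑ W : Fin N × Fin S → Bool, μ W *
        ((1 / ((N : ℝ) * ((S : ℝ) - (ℓ : ℝ)))) * ∑ n : Fin N,
          ∑ s ∈ Finset.univ.filter (fun s : Fin S => ℓ ≤ s.val),
            Y n s W *
              ((if ∀ t : Fin S, s.val - ℓ ≤ t.val → t.val ≤ s.val → W (n, t) = true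
                  then (1 : ℝ) else 0) / π₁ n s -
               (if ∀ t : Fin S, s.val - ℓ ≤ t.val → t.val ≤ s.val → W (n, t) = false
                  then (1 : ℝ) else 0) / π₀ n s))
      = (1 / ((N : ℝ) * ((S : ℝ) - (ℓ : ℝ)))) * ∑ n : Fin N,
          ∑ s ∈ Finset.univ.filter (fun s : Fin S => ℓ ≤ s.val),
            (Y n s (fun _ => true) - Y n s (fun _ => false)) := by

  have key : ∀ (n : Fin N) (s : Fin S), ℓ ≤ s.val →
      ∑ W : Fin N × Fin S → Bool, μ W *
        (Y n s W *
          ((if ∀ t : Fin S, s.val - ℓ ≤ t.val → t.val ≤ s.val → W (n, t) = true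
              then (1 : ℝ) else 0) / π₁ n s -
           (if ∀ t : Fin S, s.val - ℓ ≤ t.val → t.val ≤ s.val → W (n, t) = false
              then (1 : ℝ) else 0) / π₀ n s))
      = Y n s (fun _ => true) - Y n s (fun _ => false) := by
    intro n s hs
    have h1 : ∑ W : Fin N × Fin S → Bool,
        μ W * Y n s W *
          (if ∀ t : Fin S, s.val - ℓ ≤ t.val → t.val ≤ s.val → W (n, t) = true
            then (1 : ℝ) else 0)
        = Y n s (fun _ => true) * π₁ n s := by
      rw [hπ₁, Finset.mul_sum]
      simp only [mul_ite, mul_one, mul_zero]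
      rw [← Finset.sum_filter]
      apply Finset.sum_congr rfl
      intro W hW
      simp only [Finset.mem_filter] at hW
      have := hY n s hs W (fun _ => true) (fun t h1 h2 => hW.2 t h1 h2)
      rw [this]; ring
    have h0 : ∑ W : Fin N × Fin S → Bool,
        μ W * Y n s W *
          (if ∀ t : Fin S, s.val - ℓ ≤ t.val → t.val ≤ s.val → W (n, t) = false
            then (1 : ℝ) else 0)
        = Y n s (fun _ => false) * π₀ n s := by
      rw [hπ₀, Finset.mul_sum]
      simp only [mul_ite, mul_one, mul_zero]
      rw [← Finset.sum_filter]
      apply Finset.sum_congr rfl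
      intro W hW
      simp only [Finset.mem_filter] at hW
      have := hY n s hs W (fun _ => false) (fun t h1 h2 => hW.2 t h1 h2)
      rw [this]; ring
    have hπ₁ne := (hπ₁_pos n s hs).ne'
    have hπ₀ne := (hπ₀_pos n s hs).ne'
    have expand : ∀ W : Fin N × Fin S → Bool, μ W *
        (Y n s W *
          ((if ∀ t : Fin S, s.val - ℓ ≤ t.val → t.val ≤ s.val → W (n, t) = true
              then (1 : ℝ) else 0) / π₁ n s -
           (if ∀ t : Fin S, s.val - ℓ ≤ t.val → t.val ≤ s.val → W (n, t) = false
              then (1 : ℝ) else 0) / π₀ n s))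
        = (μ W * Y n s W *
            (if ∀ t : Fin S, s.val - ℓ ≤ t.val → t.val ≤ s.val → W (n, t) = true
              then (1 : ℝ) else 0)) / π₁ n s
          - (μ W * Y n s W *
            (if ∀ t : Fin S, s.val - ℓ ≤ t.val → t.val ≤ s.val → W (n, t) = false
              then (1 : ℝ) else 0)) / π₀ n s := by
      intro W; ring
    rw [Finset.sum_congr rfl (fun W _ => expand W), Finset.sum_sub_distrib,
      ← Finset.sum_div, ← Finset.sum_div, h1, h0,
      mul_div_assoc, mul_div_assoc, div_self hπ₁ne, div_self hπ₀ne, mul_one, mul_one]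
  have step : ∀ W : Fin N × Fin S → Bool, μ W *
        ((1 / ((N : ℝ) * ((S : ℝ) - (ℓ : ℝ)))) * ∑ n : Fin N,
          ∑ s ∈ Finset.univ.filter (fun s : Fin S => ℓ ≤ s.val),
            Y n s W *
              ((if ∀ t : Fin S, s.val - ℓ ≤ t.val → t.val ≤ s.val → W (n, t) = true
                  then (1 : ℝ) else 0) / π₁ n s -
               (if ∀ t : Fin S, s.val - ℓ ≤ t.val → t.val ≤ s.val → W (n, t) = false
                  then (1 : ℝ) else 0) / π₀ n s))
      = (1 / ((N : ℝ) * ((S : ℝ) - (ℓ : ℝ)))) * ∑ n : Fin N,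
          ∑ s ∈ Finset.univ.filter (fun s : Fin S => ℓ ≤ s.val),
            μ W * (Y n s W *
              ((if ∀ t : Fin S, s.val - ℓ ≤ t.val → t.val ≤ s.val → W (n, t) = true
                  then (1 : ℝ) else 0) / π₁ n s -
               (if ∀ t : Fin S, s.val - ℓ ≤ t.val → t.val ≤ s.val → W (n, t) = false
                  then (1 : ℝ) else 0) / π₀ n s)) := by
    intro W
    rw [mul_left_comm, Finset.mul_sum]
    congr 1
    apply Finset.sum_congr rfl
    intro n _
    rw [Finset.mul_sum]
  rw [Finset.sum_congr rfl (fun W _ => step W), ← Finset.mul_sum]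
  congr 1
  rw [Finset.sum_comm]
  apply Finset.sum_congr rfl
  intro n _
  rw [Finset.sum_comm]
  apply Finset.sum_congr rfl
  intro s hs
  simp only [Finset.mem_filter] at hs
  exact key n s hs.2
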